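/- Let Γ be a connected bipartite graph with exactly three distinct distance eigenvalues δ_0 > δ_1 > δ_2 whose distance matrix satisfies D_Γ j = δ_0 j (constant row sums). If Ω is any connected graph distance cospectral with Γ, then Ω is bipartite and its distance matrix also satisfies D_Ω j = δ_0 j. -/

import Mathlib

set_option linter.unusedSectionVars false
set_option maxHeartbeats 1000000

open SimpleGraph Matrix Finset

/-- The distance matrix of a graph, with real entries. -/
noncomputable def distMatrix {V : Type*} [Fintype V] (G : SimpleGraph V) : Matrix V V ℝ :=
  Matrix.of fun x y => (G.dist x y : ℝ)

lemma distMatrix_isHermitian {V : Type*} [Fintype V] (G : SimpleGraph V) :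
    (distMatrix G).IsHermitian := by
  ext x y
  simp [distMatrix, Matrix.conjTranspose_apply, SimpleGraph.dist_comm]

/-- The multiset of eigenvalues (with multiplicity) of the distance matrix of `G`. -/
noncomputable def distSpec {V : Type*} [Fintype V] [DecidableEq V] (G : SimpleGraph V) :
    Multiset ℝ :=
  Finset.univ.val.map (distMatrix_isHermitian G).eigenvalues

namespace Dcube

section Toolkit
variable {V : Type*} [Fintype V] [DecidableEq V] {M : Matrix V V ℝ} (hM : M.IsHermitian)

lemma dot_evec (i j : V) :
    ⇑(hM.eigenvectorBasis i) ⬝ᵥ ⇑(hM.eigenvectorBasis j) = if i = j then 1 else 0 := by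
  have h := orthonormal_iff_ite.mp hM.eigenvectorBasis.orthonormal i j
  rw [← h]
  simp [PiLp.inner_apply, dotProduct, mul_comm]

lemma sum_repr_evec (x : V → ℝ) :
    ∑ i, (⇑(hM.eigenvectorBasis i) ⬝ᵥ x) • ⇑(hM.eigenvectorBasis i) = x := by
  have h := hM.eigenvectorBasis.sum_repr' (WithLp.toLp 2 x : EuclideanSpace ℝ V)
  have h2 : ∀ i : V, (inner ℝ (hM.eigenvectorBasis i) (WithLp.toLp 2 x : EuclideanSpace ℝ V) : ℝ)
      = ⇑(hM.eigenvectorBasis i) ⬝ᵥ x := by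
    intro i
    simp [PiLp.inner_apply, dotProduct, mul_comm]
  simp only [h2] at h
  have h3 := congrArg WithLp.ofLp h
  simpa using h3

lemma mulVec_expand (x : V → ℝ) :
    M *ᵥ x = ∑ i, (hM.eigenvalues i * (⇑(hM.eigenvectorBasis i) ⬝ᵥ x)) •
      ⇑(hM.eigenvectorBasis i) := by
  conv_lhs => rw [← sum_repr_evec hM x]
  rw [← M.mulVecLin_apply, map_sum]
  refine Finset.sum_congr rfl fun i _ => ?_
  rw [_root_.map_smul, M.mulVecLin_apply, hM.mulVec_eigenvectorBasis]
  rw [smul_smul, mul_comm]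

lemma sum_dotProduct' {ι : Type*} (s : Finset ι) (f : ι → V → ℝ) (y : V → ℝ) :
    (∑ i ∈ s, f i) ⬝ᵥ y = ∑ i ∈ s, (f i ⬝ᵥ y) := by
  simp only [dotProduct, Finset.sum_apply, Finset.sum_mul]
  exact Finset.sum_comm

lemma dotProduct_sum' {ι : Type*} (s : Finset ι) (y : V → ℝ) (f : ι → V → ℝ) :
    y ⬝ᵥ (∑ i ∈ s, f i) = ∑ i ∈ s, (y ⬝ᵥ f i) := by
  simp only [dotProduct, Finset.sum_apply, Finset.mul_sum]
  exact Finset.sum_comm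

lemma dot_sum_expand (c d : V → ℝ) :
    (∑ i, c i • ⇑(hM.eigenvectorBasis i)) ⬝ᵥ (∑ i, d i • ⇑(hM.eigenvectorBasis i))
      = ∑ i, c i * d i := by
  rw [sum_dotProduct']
  refine Finset.sum_congr rfl fun i _ => ?_
  rw [dotProduct_sum']
  rw [Finset.sum_eq_single i]
  · rw [smul_dotProduct, dotProduct_smul, dot_evec hM, if_pos rfl]
    simp [smul_eq_mul]
  · intro j _ hj
    rw [smul_dotProduct, dotProduct_smul, dot_evec hM, if_neg hj.symm]
    simp
  · simp

/-- matrices agreeing on the eigenbasis are equal -/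
lemma ext_on_evec {N₁ N₂ : Matrix V V ℝ}
    (h : ∀ i, N₁ *ᵥ ⇑(hM.eigenvectorBasis i) = N₂ *ᵥ ⇑(hM.eigenvectorBasis i)) : N₁ = N₂ := by
  have key : ∀ x : V → ℝ, N₁ *ᵥ x = N₂ *ᵥ x := by
    intro x
    conv_lhs => rw [← sum_repr_evec hM x]
    conv_rhs => rw [← sum_repr_evec hM x]
    rw [← N₁.mulVecLin_apply, ← N₂.mulVecLin_apply, map_sum, map_sum]
    refine Finset.sum_congr rfl fun i _ => ?_
    simp only [_root_.map_smul, mulVecLin_apply, h i]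
  ext a b
  have := congrFun (key (Pi.single b 1)) a
  simpa using this

lemma dot_self_expand (x : V → ℝ) :
    x ⬝ᵥ x = ∑ i, (⇑(hM.eigenvectorBasis i) ⬝ᵥ x)^2 := by
  conv_lhs => rw [← sum_repr_evec hM x]
  rw [dot_sum_expand hM]
  exact Finset.sum_congr rfl fun i _ => (sq _).symm

lemma dot_mulVec_expand (x : V → ℝ) :
    x ⬝ᵥ (M *ᵥ x) = ∑ i, hM.eigenvalues i * (⇑(hM.eigenvectorBasis i) ⬝ᵥ x)^2 := by
  rw [mulVec_expand hM x]
  nth_rewrite 1 [← sum_repr_evec hM x]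
  rw [dot_sum_expand hM]
  exact Finset.sum_congr rfl fun i _ => by ring

/-- Perron-type lemma: an eigenvector for the top eigenvalue of a symmetric matrix with
positive off-diagonal entries has no zero entry. -/
lemma no_zero_entry (hnn : ∀ a b, 0 ≤ M a b) (hpos : ∀ a b, a ≠ b → 0 < M a b)
    {δ0 : ℝ} (hub : ∀ i, hM.eigenvalues i ≤ δ0) {v : V → ℝ} (hv : M *ᵥ v = δ0 • v)
    (hv0 : v ≠ 0) (a : V) : v a ≠ 0 := by
  set u : V → ℝ := fun k => |v k| with hu_def
  have hdotuu : u ⬝ᵥ u = v ⬝ᵥ v := by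
    refine Finset.sum_congr rfl fun k _ => ?_
    simp [hu_def, abs_mul_abs_self]
  have hMvv : v ⬝ᵥ (M *ᵥ v) = δ0 * (v ⬝ᵥ v) := by
    rw [hv, dotProduct_smul, smul_eq_mul]
  have hcomp : v ⬝ᵥ (M *ᵥ v) ≤ u ⬝ᵥ (M *ᵥ u) := by
    simp only [dotProduct, mulVec, Finset.mul_sum]
    refine Finset.sum_le_sum fun j _ => Finset.sum_le_sum fun k _ => ?_
    calc v j * (M j k * v k) ≤ |v j * (M j k * v k)| := le_abs_self _
      _ = u j * (M j k * u k) := by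
          rw [abs_mul, abs_mul, abs_of_nonneg (hnn j k)]
  have hkey : ∀ i, (δ0 - hM.eigenvalues i) * (⇑(hM.eigenvectorBasis i) ⬝ᵥ u)^2 = 0 := by
    have hsum : ∑ i, (δ0 - hM.eigenvalues i) * (⇑(hM.eigenvectorBasis i) ⬝ᵥ u)^2 ≤ 0 := by
      have : ∑ i, (δ0 - hM.eigenvalues i) * (⇑(hM.eigenvectorBasis i) ⬝ᵥ u)^2
          = δ0 * (u ⬝ᵥ u) - u ⬝ᵥ (M *ᵥ u) := by
        rw [dot_self_expand hM u, dot_mulVec_expand hM u, Finset.mul_sum,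
          ← Finset.sum_sub_distrib]
        exact Finset.sum_congr rfl fun i _ => by ring
      rw [this, hdotuu]
      linarith [hcomp, hMvv]
    have h0 : ∀ i ∈ Finset.univ (α := V),
        0 ≤ (δ0 - hM.eigenvalues i) * (⇑(hM.eigenvectorBasis i) ⬝ᵥ u)^2 := fun i _ =>
      mul_nonneg (by linarith [hub i]) (sq_nonneg _)
    intro i
    have := (Finset.sum_eq_zero_iff_of_nonneg h0).mp (le_antisymm hsum (Finset.sum_nonneg h0))
    exact this i (Finset.mem_univ i)
  have hMu : M *ᵥ u = δ0 • u := by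
    rw [mulVec_expand hM u]
    conv_rhs => rw [← sum_repr_evec hM u, Finset.smul_sum]
    refine Finset.sum_congr rfl fun i _ => ?_
    rw [smul_smul]
    rcases mul_eq_zero.mp (hkey i) with h | h
    · rw [show hM.eigenvalues i = δ0 by linarith]
    · rw [pow_eq_zero_iff (by norm_num)] at h
      rw [h, mul_zero, mul_zero]
  intro hva
  have hua : u a = 0 := by simp [hu_def, hva]
  have hsum0 : ∑ k, M a k * u k = 0 := by
    have := congrFun hMu a
    simpa [mulVec, dotProduct, hua] using this
  have hall : ∀ k, k ≠ a → u k = 0 := by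
    intro k hk
    have h0 : ∀ j ∈ Finset.univ (α := V), 0 ≤ M a j * u j := fun j _ =>
      mul_nonneg (hnn a j) (abs_nonneg _)
    have := (Finset.sum_eq_zero_iff_of_nonneg h0).mp hsum0 k (Finset.mem_univ k)
    rcases mul_eq_zero.mp this with h | h
    · exact absurd h (ne_of_gt (hpos a k (Ne.symm hk)))
    · exact h
  apply hv0
  funext k
  rcases eq_or_ne k a with rfl | hk
  · exact hva
  · exact abs_eq_zero.mp (hall k hk)

lemma evec_fun_ne_zero (i : V) : ⇑(hM.eigenvectorBasis i) ≠ (0 : V → ℝ) := by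
  intro h
  apply hM.eigenvectorBasis.orthonormal.ne_zero i
  ext k
  exact congrFun h k

/-- uniqueness of the index achieving the top eigenvalue -/
lemma top_index_unique [Nonempty V] (hnn : ∀ a b, 0 ≤ M a b)
    (hpos : ∀ a b, a ≠ b → 0 < M a b) {δ0 : ℝ} (hub : ∀ i, hM.eigenvalues i ≤ δ0)
    {i j : V} (hi : hM.eigenvalues i = δ0) (hj : hM.eigenvalues j = δ0) : i = j := by
  by_contra hij
  set bi := ⇑(hM.eigenvectorBasis i) with hbi
  set bj := ⇑(hM.eigenvectorBasis j) with hbj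
  have hvi : M *ᵥ bi = δ0 • bi := by rw [hbi, hM.mulVec_eigenvectorBasis, hi]
  have hvj : M *ᵥ bj = δ0 • bj := by rw [hbj, hM.mulVec_eigenvectorBasis, hj]
  obtain ⟨a⟩ := ‹Nonempty V›
  set w : V → ℝ := bj a • bi - bi a • bj with hw
  have hvw : M *ᵥ w = δ0 • w := by
    rw [hw, mulVec_sub, mulVec_smul, mulVec_smul, hvi, hvj]
    rw [smul_sub]
    rw [smul_comm (bj a) δ0, smul_comm (bi a) δ0]
  have hwa : w a = 0 := by simp [hw, mul_comm]
  have hw0 : w = 0 := by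
    by_contra h
    exact no_zero_entry hM hnn hpos hub hvw h a hwa
  have hdot := congrArg (fun z => bi ⬝ᵥ z) hw0
  simp only [hw, dotProduct_sub, dotProduct_smul, dotProduct_zero, smul_eq_mul] at hdot
  have d1 : bi ⬝ᵥ bi = 1 := by rw [hbi]; simpa using dot_evec hM i i
  have d2 : bi ⬝ᵥ bj = 0 := by rw [hbi, hbj]; simpa [hij] using dot_evec hM i j
  rw [d1, d2] at hdot
  have hbja : bj a = 0 := by linarith [hdot]
  exact no_zero_entry hM hnn hpos hub hvj (evec_fun_ne_zero hM j) a hbja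

lemma vecMulVec_mulVec (u w x : V → ℝ) : vecMulVec u w *ᵥ x = (w ⬝ᵥ x) • u := by
  funext a
  simp only [mulVec, dotProduct, vecMulVec_apply, Pi.smul_apply, smul_eq_mul, Finset.sum_mul,
    Finset.mul_sum]
  refine Finset.sum_congr rfl fun k _ => by ring

/-- the rank-one quadratic identity -/
lemma quad_rank_one {δ0 δ1 δ2 : ℝ} {i0 : V} (h0 : hM.eigenvalues i0 = δ0)
    (hother : ∀ i, i ≠ i0 → hM.eigenvalues i = δ1 ∨ hM.eigenvalues i = δ2) :
    M * M - (δ1 + δ2) • M + (δ1 * δ2) • (1 : Matrix V V ℝ)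
      = ((δ0 - δ1) * (δ0 - δ2)) •
        vecMulVec ⇑(hM.eigenvectorBasis i0) ⇑(hM.eigenvectorBasis i0) := by
  apply ext_on_evec hM
  intro i
  have hb := hM.mulVec_eigenvectorBasis i
  have hL : (M * M - (δ1 + δ2) • M + (δ1 * δ2) • (1 : Matrix V V ℝ)) *ᵥ ⇑(hM.eigenvectorBasis i)
      = ((hM.eigenvalues i - δ1) * (hM.eigenvalues i - δ2)) • ⇑(hM.eigenvectorBasis i) := by
    rw [add_mulVec, sub_mulVec, smul_mulVec, smul_mulVec, one_mulVec,
      ← mulVec_mulVec, hb, mulVec_smul, hb]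
    rw [smul_smul]
    funext k
    simp only [Pi.add_apply, Pi.sub_apply, Pi.smul_apply, smul_eq_mul]
    ring
  rw [hL, smul_mulVec, vecMulVec_mulVec, dot_evec hM]
  rcases eq_or_ne i i0 with rfl | hi
  · rw [if_pos rfl, h0, one_smul]
  · rw [if_neg (Ne.symm hi), zero_smul, smul_zero]
    rcases hother i hi with h | h <;> rw [h] <;> simp

lemma dot_mulVec_symm (hsym : ∀ a b, M a b = M b a) (x y : V → ℝ) :
    x ⬝ᵥ (M *ᵥ y) = (M *ᵥ x) ⬝ᵥ y := by
  simp only [dotProduct, mulVec, Finset.mul_sum, Finset.sum_mul]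
  rw [Finset.sum_comm]
  refine Finset.sum_congr rfl fun k _ => Finset.sum_congr rfl fun j _ => by
    rw [hsym j k]; ring

lemma edge_sum_eq (E : Matrix V V ℝ) (hsym : ∀ a b, E a b = E b a)
    (hdiag : ∀ a, E a a = 0) {s q γ : ℝ} {u : V → ℝ}
    (hid : ∀ a b, (E * E) a b = γ * (u a * u b) + s * E a b - q * (if a = b then (1:ℝ) else 0))
    {x y : V} (hxy : x ≠ y) (hExy : E x y = 1) :
    ∑ k, (E x k - E y k)^2 = γ * (u x - u y)^2 - 2*q - 2*s := by
  have h1 : ∑ k, E x k * E x k = (E*E) x x := by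
    rw [mul_apply]; exact Finset.sum_congr rfl fun k _ => by rw [hsym k x]
  have h2 : ∑ k, E y k * E y k = (E*E) y y := by
    rw [mul_apply]; exact Finset.sum_congr rfl fun k _ => by rw [hsym k y]
  have h3 : ∑ k, E x k * E y k = (E*E) x y := by
    rw [mul_apply]; exact Finset.sum_congr rfl fun k _ => by rw [hsym k y]
  have hexp : ∑ k, (E x k - E y k)^2
      = ∑ k, (E x k * E x k) + ∑ k, (E y k * E y k) - 2 * ∑ k, (E x k * E y k) := by
    rw [Finset.mul_sum, ← Finset.sum_add_distrib, ← Finset.sum_sub_distrib]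
    exact Finset.sum_congr rfl fun k _ => by ring
  rw [hexp, h1, h2, h3, hid x x, hid y y, hid x y, hdiag x, hdiag y,
    if_pos rfl, if_pos rfl, if_neg hxy, hExy]
  ring

end Toolkit

section GraphLemmas
variable {V : Type*} [Fintype V] [DecidableEq V]

lemma distMatrix_apply (G : SimpleGraph V) (a b : V) : distMatrix G a b = (G.dist a b : ℝ) := rfl

lemma distMatrix_nonneg (G : SimpleGraph V) (a b : V) : 0 ≤ distMatrix G a b := by
  simp [distMatrix_apply]

lemma distMatrix_pos {G : SimpleGraph V} (hconn : G.Connected) {a b : V} (hab : a ≠ b) :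
    0 < distMatrix G a b := by
  simp only [distMatrix_apply]
  exact_mod_cast hconn.pos_dist_of_ne hab

lemma distMatrix_diag (G : SimpleGraph V) (a : V) : distMatrix G a a = 0 := by
  simp [distMatrix_apply]

lemma distMatrix_symm (G : SimpleGraph V) (a b : V) : distMatrix G a b = distMatrix G b a := by
  simp [distMatrix_apply, SimpleGraph.dist_comm]

lemma dist_adj_le {G : SimpleGraph V} (hconn : G.Connected) {x y : V} (hxy : G.Adj x y)
    (k : V) : G.dist x k ≤ G.dist y k + 1 := by
  have ht := hconn.dist_triangle (u := x) (v := y) (w := k)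
  have h1 : G.dist x y = 1 := (SimpleGraph.dist_eq_one_iff_adj).mpr hxy
  omega

lemma exists_adj {G : SimpleGraph V} (hconn : G.Connected) {x y : V} (hxy : x ≠ y) :
    ∃ a b, G.Adj a b := by
  obtain ⟨w⟩ := hconn.preconnected x y
  cases w with
  | nil => exact absurd rfl hxy
  | cons h p => exact ⟨_, _, h⟩

lemma fin2_ne_step : ∀ s t : Fin 2, s ≠ t → ((s.val : ZMod 2) = (t.val : ZMod 2) + 1) := by
  decide

lemma fin2_cast_inj : ∀ s t : Fin 2, ((s.val : ZMod 2) = (t.val : ZMod 2)) → s = t := by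
  decide

lemma coloring_walk_parity {G : SimpleGraph V} (C : G.Coloring (Fin 2)) {a b : V}
    (w : G.Walk a b) : ((C a).val : ZMod 2) = ((C b).val : ZMod 2) + (w.length : ZMod 2) := by
  induction w with
  | nil => simp
  | cons h p ih =>
    have step := fin2_ne_step _ _ (C.valid h)
    rw [SimpleGraph.Walk.length_cons, step, ih]
    push_cast
    ring

lemma coloring_dist_parity {G : SimpleGraph V} (hconn : G.Connected) (C : G.Coloring (Fin 2))
    (a b : V) : ((C a).val : ZMod 2) = ((C b).val : ZMod 2) + (G.dist a b : ZMod 2) := by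
  obtain ⟨w, hw⟩ := (hconn.preconnected a b).exists_walk_length_eq_dist
  rw [← hw]
  exact coloring_walk_parity C w

lemma bipartite_dist_ne {G : SimpleGraph V} (hconn : G.Connected) (C : G.Coloring (Fin 2))
    {x y : V} (hxy : G.Adj x y) (k : V) : G.dist x k ≠ G.dist y k := by
  intro h
  have hx := coloring_dist_parity hconn C x k
  have hy := coloring_dist_parity hconn C y k
  rw [h] at hx
  have hxyc : ((C x).val : ZMod 2) = ((C y).val : ZMod 2) := by rw [hx, hy]
  exact C.valid hxy (fin2_cast_inj _ _ hxyc)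

end GraphLemmas

end Dcube

open Dcube

theorem dcube_stmt15 {V W : Type*} [Fintype V] [DecidableEq V] [Fintype W] [DecidableEq W]
    (Γ : SimpleGraph V) (hΓconn : Γ.Connected) (hΓbip : Γ.Colorable 2)
    (δ0 δ1 δ2 : ℝ) (h21 : δ2 < δ1) (h10 : δ1 < δ0)
    (hspec : (distSpec Γ).toFinset = {δ0, δ1, δ2})
    (hrow : distMatrix Γ *ᵥ (fun _ => (1 : ℝ)) = δ0 • fun _ => (1 : ℝ))
    (Ω : SimpleGraph W) (hΩconn : Ω.Connected)
    (hcospec : distSpec Ω = distSpec Γ) :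
    Ω.Colorable 2 ∧ distMatrix Ω *ᵥ (fun _ => (1 : ℝ)) = δ0 • fun _ => (1 : ℝ) := by
  haveI : Nonempty V := hΓconn.nonempty
  haveI : Nonempty W := hΩconn.nonempty
  set D := distMatrix Γ with hDdef
  set E := distMatrix Ω with hEdef
  have hD := distMatrix_isHermitian Γ
  have hE := distMatrix_isHermitian Ω
  set γ : ℝ := (δ0 - δ1) * (δ0 - δ2) with hγdef
  have hγpos : 0 < γ := mul_pos (by linarith) (by linarith)
  -- basic entry facts
  have hDsym : ∀ a b, D a b = D b a := fun a b => distMatrix_symm Γ a b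
  have hEsym : ∀ a b, E a b = E b a := fun a b => distMatrix_symm Ω a b
  have hDnn : ∀ a b, 0 ≤ D a b := fun a b => distMatrix_nonneg Γ a b
  have hEnn : ∀ a b, 0 ≤ E a b := fun a b => distMatrix_nonneg Ω a b
  have hDpos : ∀ a b, a ≠ b → 0 < D a b := fun a b h => distMatrix_pos hΓconn h
  have hEpos : ∀ a b, a ≠ b → 0 < E a b := fun a b h => distMatrix_pos hΩconn h
  -- eigenvalue membership
  have hmemΓ : ∀ i, hD.eigenvalues i = δ0 ∨ hD.eigenvalues i = δ1 ∨ hD.eigenvalues i = δ2 := by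
    intro i
    have h1 : hD.eigenvalues i ∈ (distSpec Γ).toFinset := by
      rw [Multiset.mem_toFinset]
      exact Multiset.mem_map_of_mem _ (Finset.mem_univ_val _)
    rw [hspec] at h1
    simpa using h1
  have hmemΩ : ∀ i, hE.eigenvalues i = δ0 ∨ hE.eigenvalues i = δ1 ∨ hE.eigenvalues i = δ2 := by
    intro i
    have h1 : hE.eigenvalues i ∈ (distSpec Ω).toFinset := by
      rw [Multiset.mem_toFinset]
      exact Multiset.mem_map_of_mem _ (Finset.mem_univ_val _)
    rw [hcospec, hspec] at h1
    simpa using h1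
  have hubΓ : ∀ i, hD.eigenvalues i ≤ δ0 := by
    intro i; rcases hmemΓ i with h | h | h <;> rw [h] <;> linarith
  have hubΩ : ∀ i, hE.eigenvalues i ≤ δ0 := by
    intro i; rcases hmemΩ i with h | h | h <;> rw [h] <;> linarith
  -- existence of top index for Γ
  have hδ0Γ : δ0 ∈ distSpec Γ := by
    rw [← Multiset.mem_toFinset, hspec]
    exact Finset.mem_insert_self _ _
  obtain ⟨i0, _, hi0⟩ := Multiset.mem_map.mp hδ0Γ
  have hδ0Ω : δ0 ∈ distSpec Ω := by
    rw [← Multiset.mem_toFinset, hcospec, hspec]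
    exact Finset.mem_insert_self _ _
  obtain ⟨j0, _, hj0⟩ := Multiset.mem_map.mp hδ0Ω
  -- uniqueness and the "other" eigenvalues
  have hotherΓ : ∀ i, i ≠ i0 → hD.eigenvalues i = δ1 ∨ hD.eigenvalues i = δ2 := by
    intro i hi
    rcases hmemΓ i with h | h | h
    · exact absurd (top_index_unique hD hDnn hDpos hubΓ h hi0) hi
    · exact Or.inl h
    · exact Or.inr h
  have hotherΩ : ∀ i, i ≠ j0 → hE.eigenvalues i = δ1 ∨ hE.eigenvalues i = δ2 := by
    intro i hi
    rcases hmemΩ i with h | h | h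
    · exact absurd (top_index_unique hE hEnn hEpos hubΩ h hj0) hi
    · exact Or.inl h
    · exact Or.inr h
  -- rank one identities
  have hPΓ := quad_rank_one hD hi0 hotherΓ
  have hPΩ := quad_rank_one hE hj0 hotherΩ
  set v : V → ℝ := ⇑(hD.eigenvectorBasis i0) with hvdef
  set u : W → ℝ := ⇑(hE.eigenvectorBasis j0) with hudef
  have hidΓ : ∀ a b, (D * D) a b
      = γ * (v a * v b) + (δ1 + δ2) * D a b - (δ1 * δ2) * (if a = b then (1:ℝ) else 0) := by
    intro a b
    have h := congrFun (congrFun hPΓ a) b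
    rw [← hDdef, ← hγdef] at h
    simp only [Matrix.add_apply, Matrix.sub_apply, Matrix.smul_apply, Matrix.one_apply,
      Matrix.vecMulVec_apply, smul_eq_mul] at h
    rcases eq_or_ne a b with rfl | hab
    · rw [if_pos rfl] at h ⊢
      linarith [h]
    · rw [if_neg hab] at h ⊢
      linarith [h]
  have hidΩ : ∀ a b, (E * E) a b
      = γ * (u a * u b) + (δ1 + δ2) * E a b - (δ1 * δ2) * (if a = b then (1:ℝ) else 0) := by
    intro a b
    have h := congrFun (congrFun hPΩ a) b
    rw [← hEdef, ← hγdef] at h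
    simp only [Matrix.add_apply, Matrix.sub_apply, Matrix.smul_apply, Matrix.one_apply,
      Matrix.vecMulVec_apply, smul_eq_mul] at h
    rcases eq_or_ne a b with rfl | hab
    · rw [if_pos rfl] at h ⊢
      linarith [h]
    · rw [if_neg hab] at h ⊢
      linarith [h]
  -- v is constant (uses hrow)
  have hcoefΓ : ∀ i, i ≠ i0 → (⇑(hD.eigenvectorBasis i) ⬝ᵥ (fun _ => (1:ℝ))) = 0 := by
    intro i hi
    have h1 : ⇑(hD.eigenvectorBasis i) ⬝ᵥ (D *ᵥ (fun _ => (1:ℝ)))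
        = δ0 * (⇑(hD.eigenvectorBasis i) ⬝ᵥ (fun _ => (1:ℝ))) := by
      rw [hrow, dotProduct_smul, smul_eq_mul]
    rw [dot_mulVec_symm hDsym, hD.mulVec_eigenvectorBasis, smul_dotProduct,
      smul_eq_mul] at h1
    have hne : hD.eigenvalues i ≠ δ0 := by
      intro h
      exact hi (top_index_unique hD hDnn hDpos hubΓ h hi0)
    rcases mul_eq_mul_right_iff.mp h1 with h | h
    · exact absurd h hne
    · exact h
  set c0 : ℝ := v ⬝ᵥ (fun _ => (1:ℝ)) with hc0def
  have hones_repr : c0 • v = (fun _ => (1:ℝ)) := by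
    have h := sum_repr_evec hD (fun _ => (1:ℝ))
    rw [Finset.sum_eq_single i0] at h
    · exact h
    · intro i _ hi
      rw [hcoefΓ i hi, zero_smul]
    · intro h; exact absurd (Finset.mem_univ i0) h
  have hc0ne : c0 ≠ 0 := by
    intro h
    have := congrFun hones_repr (Classical.arbitrary V)
    rw [h, zero_smul] at this
    simpa using this
  have hvconst : ∀ a, v a = c0⁻¹ := by
    intro a
    have h := congrFun hones_repr a
    simp only [Pi.smul_apply, smul_eq_mul] at h
    field_simp
    linarith [h]
  -- an edge of Γ
  have hcard3 : 3 ≤ Fintype.card V := by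
    have h1 : ({δ0, δ1, δ2} : Finset ℝ).card = 3 := by
      rw [Finset.card_insert_of_notMem, Finset.card_insert_of_notMem, Finset.card_singleton]
      · simp only [Finset.mem_singleton]; intro h; linarith
      · simp only [Finset.mem_insert, Finset.mem_singleton]
        push_neg
        constructor <;> intro h <;> linarith
    have h2 : (distSpec Γ).toFinset.card ≤ Multiset.card (distSpec Γ) :=
      Multiset.toFinset_card_le _
    have h3 : Multiset.card (distSpec Γ) = Fintype.card V := by
      simp [distSpec]
    rw [hspec, h1] at h2
    omega
  haveI : Nontrivial V := Fintype.one_lt_card_iff_nontrivial.mp (by omega)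
  obtain ⟨a₀, b₀, hne₀⟩ := exists_pair_ne V
  obtain ⟨x, y, hxy⟩ := exists_adj hΓconn hne₀
  obtain ⟨C⟩ := hΓbip
  -- the key numeric identity : card V = -2q-2s
  have hDxy : D x y = 1 := by
    rw [hDdef, distMatrix_apply]
    exact_mod_cast (SimpleGraph.dist_eq_one_iff_adj).mpr hxy
  have hSΓ : ∑ k, (D x k - D y k)^2
      = γ * (v x - v y)^2 - 2*(δ1 * δ2) - 2*(δ1 + δ2) :=
    edge_sum_eq D hDsym (fun a => distMatrix_diag Γ a) hidΓ hxy.ne hDxy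
  have htermΓ : ∀ k, (D x k - D y k)^2 = 1 := by
    intro k
    have hne := bipartite_dist_ne hΓconn C hxy k
    have h1 := dist_adj_le hΓconn hxy k
    have h2 := dist_adj_le hΓconn hxy.symm k
    have : Γ.dist x k = Γ.dist y k + 1 ∨ Γ.dist y k = Γ.dist x k + 1 := by omega
    rcases this with h | h <;>
    · rw [hDdef]
      simp only [distMatrix_apply, h]
      push_cast
      ring
  have hidentity : (Fintype.card V : ℝ) = - 2*(δ1 * δ2) - 2*(δ1 + δ2) := by
    have h1 : ∑ k, (D x k - D y k)^2 = (Fintype.card V : ℝ) := by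
      rw [Finset.sum_congr rfl fun k _ => htermΓ k]
      simp
    rw [h1] at hSΓ
    rw [hvconst x, hvconst y] at hSΓ
    simp at hSΓ
    linarith [hSΓ]
  have hcardVW : Fintype.card V = Fintype.card W := by
    have h := congrArg Multiset.card hcospec
    simp [distSpec] at h
    omega
  ----------------------------------------------------------------
  -- Ω side
  ----------------------------------------------------------------
  have hboundΩ : ∀ {x y : W}, Ω.Adj x y → ∀ k, (E x k - E y k)^2 ≤ 1 := by
    intro x y hadj k
    have h1 := dist_adj_le hΩconn hadj k
    have h2 := dist_adj_le hΩconn hadj.symm k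
    rw [hEdef]
    simp only [distMatrix_apply]
    have h1' : (Ω.dist x k : ℝ) ≤ (Ω.dist y k : ℝ) + 1 := by exact_mod_cast h1
    have h2' : (Ω.dist y k : ℝ) ≤ (Ω.dist x k : ℝ) + 1 := by exact_mod_cast h2
    nlinarith [h1', h2']
  have hSΩ : ∀ {a b : W}, Ω.Adj a b → ∑ k, (E a k - E b k)^2
      = γ * (u a - u b)^2 - 2*(δ1 * δ2) - 2*(δ1 + δ2) := by
    intro a b hadj
    have hEab : E a b = 1 := by
      rw [hEdef, distMatrix_apply]
      exact_mod_cast (SimpleGraph.dist_eq_one_iff_adj).mpr hadj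
    exact edge_sum_eq E hEsym (fun c => distMatrix_diag Ω c) hidΩ hadj.ne hEab
  -- u is constant along edges
  have huedge : ∀ {a b : W}, Ω.Adj a b → u a = u b := by
    intro a b hadj
    have hle : ∑ k, (E a k - E b k)^2 ≤ (Fintype.card W : ℝ) := by
      calc ∑ k, (E a k - E b k)^2 ≤ ∑ _k : W, (1:ℝ) :=
            Finset.sum_le_sum fun k _ => hboundΩ hadj k
        _ = (Fintype.card W : ℝ) := by simp
    rw [hSΩ hadj] at hle
    have hn : (Fintype.card W : ℝ) = - 2*(δ1 * δ2) - 2*(δ1 + δ2) := by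
      rw [← hcardVW] at *
      exact_mod_cast hidentity
    have hsq : γ * (u a - u b)^2 ≤ 0 := by
      rw [hn] at hle
      linarith [hle]
    have h0 : (u a - u b)^2 = 0 := by nlinarith [sq_nonneg (u a - u b), hγpos, hsq]
    have := pow_eq_zero_iff (n := 2) (by norm_num) |>.mp h0
    linarith [this]
  -- u is globally constant
  have huconst : ∀ a b : W, u a = u b := by
    have hwalk : ∀ (a b : W) (w : Ω.Walk a b), u a = u b := by
      intro a b w
      induction w with
      | nil => rfl
      | cons h p ih => rw [huedge h, ih]
    intro a b
    obtain ⟨w⟩ := hΩconn.preconnected a b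
    exact hwalk a b w
  set κ : ℝ := u (Classical.arbitrary W) with hκdef
  have hκne : κ ≠ 0 := by
    intro h
    apply evec_fun_ne_zero hE j0
    funext k
    rw [← hudef]
    rw [huconst k (Classical.arbitrary W), ← hκdef, h]
    rfl
  have hEu : E *ᵥ u = δ0 • u := by
    rw [hudef, hE.mulVec_eigenvectorBasis, hj0]
  -- second conclusion
  have hconc2 : E *ᵥ (fun _ => (1:ℝ)) = δ0 • fun _ => (1:ℝ) := by
    funext a
    have h := congrFun hEu a
    have huk : ∀ k, u k = κ := fun k => huconst k (Classical.arbitrary W)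
    simp only [mulVec, dotProduct, Pi.smul_apply, smul_eq_mul] at h ⊢
    rw [Finset.sum_congr rfl (fun k _ => by rw [huk k]), huk a] at h
    rw [← Finset.sum_mul] at h
    have h2 := mul_right_cancel₀ hκne h
    simpa using h2
  refine ⟨?_, hconc2⟩
  ----------------------------------------------------------------
  -- bipartiteness of Ω
  ----------------------------------------------------------------
  have htermΩ : ∀ {a b : W}, Ω.Adj a b → ∀ k, (E a k - E b k)^2 = 1 := by
    intro a b hadj k
    by_contra hk
    have hklt : (E a k - E b k)^2 < 1 := lt_of_le_of_ne (hboundΩ hadj k) hk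
    have hlt : ∑ j, (E a j - E b j)^2 < (Fintype.card W : ℝ) := by
      calc ∑ j, (E a j - E b j)^2 < ∑ _j : W, (1:ℝ) := by
            refine Finset.sum_lt_sum (fun j _ => hboundΩ hadj j) ⟨k, Finset.mem_univ k, hklt⟩
        _ = (Fintype.card W : ℝ) := by simp
    rw [hSΩ hadj] at hlt
    rw [huconst a b] at hlt
    have hn : (Fintype.card W : ℝ) = - 2*(δ1 * δ2) - 2*(δ1 + δ2) := by
      rw [← hcardVW] at *
      exact_mod_cast hidentity
    rw [hn, sub_self] at hlt
    norm_num at hlt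
  have hdistne : ∀ {a b : W}, Ω.Adj a b → ∀ k, Ω.dist a k ≠ Ω.dist b k := by
    intro a b hadj k h
    have := htermΩ hadj k
    rw [hEdef] at this
    simp only [distMatrix_apply, h] at this
    simp at this
  -- construct the 2-coloring by parity of distance to a fixed vertex
  set w0 : W := Classical.arbitrary W with hw0def
  have hvalid : ∀ {a b : W}, Ω.Adj a b → ((Ω.dist a w0 : ZMod 2) ≠ (Ω.dist b w0 : ZMod 2)) := by
    intro a b hadj
    have hne := hdistne hadj w0
    have h1 := dist_adj_le hΩconn hadj w0
    have h2 := dist_adj_le hΩconn hadj.symm w0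
    have hcase : Ω.dist a w0 = Ω.dist b w0 + 1 ∨ Ω.dist b w0 = Ω.dist a w0 + 1 := by omega
    have hz : ∀ z : ZMod 2, z ≠ z + 1 := by decide
    rcases hcase with h | h <;> rw [h]
    · push_cast
      intro hcon
      exact hz _ hcon.symm
    · push_cast
      intro hcon
      exact hz _ hcon
  have hcol : Ω.Coloring (ZMod 2) := SimpleGraph.Coloring.mk
    (fun a => (Ω.dist a w0 : ZMod 2)) (fun {a b} hadj => hvalid hadj)
  have := hcol.colorable
  simpa using this
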